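/- arXiv:1602.05598 — 2 statements merged into one kernel-verified Lean document; each statement's English description precedes it below -/
import Mathlib

section
/- There exists a Lipschitz orthonormal (d−1)-frame on the closed upper hemisphere of the unit sphere in ℝ^d: there is a constant C > 0 and a map f assigning to each x ∈ 𝕊^{d−1} with x_d ≥ 0 an orthonormal basis (v₁(x),…,v_{d−1}(x)) of the tangent space T_x𝕊^{d−1} ⊆ ℝ^d, such that |vᵢ(x) − vᵢ(y)| ≤ C|x − y| for all i and all x, y in the upper hemisphere. -/
open scoped RealInnerProductSpace

section aux

variable {d : ℕ}

lemma abs_apply_le_norm (x : EuclideanSpace ℝ (Fin d)) (i : Fin d) : |x i| ≤ ‖x‖ := by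
  have h := abs_real_inner_le_norm (EuclideanSpace.single i (1:ℝ)) x
  simpa [EuclideanSpace.inner_single_left, EuclideanSpace.norm_single] using h

end aux

/-- There is a Lipschitz orthonormal `(d-1)`-frame on the closed upper hemisphere of the
unit sphere in `ℝ^d`: each `v x i` is tangent to the sphere at `x`, the `v x i` are
orthonormal, and `x ↦ v x i` is Lipschitz on the upper hemisphere. -/
theorem exists_lipschitz_frame_upper_hemisphere (d : ℕ) (hd : 2 ≤ d) :
    ∃ C > (0 : ℝ), ∃ v : EuclideanSpace ℝ (Fin d) → Fin (d - 1) → EuclideanSpace ℝ (Fin d),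
      (∀ x : EuclideanSpace ℝ (Fin d), ‖x‖ = 1 → 0 ≤ x ⟨d - 1, by omega⟩ →
        (∀ i, ⟪v x i, x⟫ = (0 : ℝ)) ∧
        (∀ i j, ⟪v x i, v x j⟫ = (if i = j then (1 : ℝ) else 0))) ∧
      (∀ x y : EuclideanSpace ℝ (Fin d), ‖x‖ = 1 → 0 ≤ x ⟨d - 1, by omega⟩ →
        ‖y‖ = 1 → 0 ≤ y ⟨d - 1, by omega⟩ →
        ∀ i, ‖v x i - v y i‖ ≤ C * ‖x - y‖) := by
  have hd1 : d - 1 ≤ d := by omega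
  set L : Fin d := ⟨d - 1, by omega⟩ with hL
  set ι : Fin (d - 1) → Fin d := Fin.castLE hd1 with hι
  have hne : ∀ i : Fin (d - 1), ι i ≠ L := by
    intro i h
    have : (ι i : ℕ) = d - 1 := by rw [h]
    have : (i : ℕ) = d - 1 := by simpa [hι] using this
    omega
  set e : EuclideanSpace ℝ (Fin d) := EuclideanSpace.single L (1:ℝ) with he
  set w : EuclideanSpace ℝ (Fin d) → EuclideanSpace ℝ (Fin d) := fun x => e + x with hw
  set c : EuclideanSpace ℝ (Fin d) → Fin (d - 1) → ℝ :=
    fun x i => x (ι i) / (1 + x L) with hc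
  refine ⟨10, by norm_num, fun x i =>
    EuclideanSpace.single (ι i) (1:ℝ) - c x i • w x, ?_, ?_⟩
  · intro x hx hxL
    have hden : (0:ℝ) < 1 + x L := by linarith
    have hxx : ⟪x, x⟫ = (1:ℝ) := by
      rw [real_inner_self_eq_norm_sq, hx]; norm_num
    have hsx : ∀ j : Fin (d - 1), ⟪EuclideanSpace.single (ι j) (1:ℝ), x⟫ = x (ι j) := by
      intro j; simp [EuclideanSpace.inner_single_left]
    have hex : ⟪e, x⟫ = x L := by simp [he, EuclideanSpace.inner_single_left]
    have hwx : ⟪w x, x⟫ = x L + 1 := by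
      simp [hw, inner_add_left, hex, hxx, hx]
    have hsw : ∀ j : Fin (d - 1), ⟪EuclideanSpace.single (ι j) (1:ℝ), w x⟫ = x (ι j) := by
      intro j
      simp [hw, he, inner_add_right, EuclideanSpace.inner_single_left,
        EuclideanSpace.single_apply, Ne.symm (hne j)]
    have hws : ∀ j : Fin (d - 1), ⟪w x, EuclideanSpace.single (ι j) (1:ℝ)⟫ = x (ι j) := by
      intro j; rw [real_inner_comm]; exact hsw j
    have hww : ⟪w x, w x⟫ = 2 * (1 + x L) := by
      have hee : ⟪e, e⟫ = (1:ℝ) := by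
        simp [he, EuclideanSpace.inner_single_left, EuclideanSpace.single_apply]
      have hxe : ⟪x, e⟫ = x L := by rw [real_inner_comm]; exact hex
      simp only [hw, inner_add_left, inner_add_right, hee, hex, hxe, hxx]
      ring
    constructor
    · intro i
      rw [inner_sub_left, inner_smul_left, hsx i, hwx]
      simp only [RCLike.conj_to_real, hc]
      field_simp
      try ring
    · intro i j
      have hss : ⟪EuclideanSpace.single (ι i) (1:ℝ), EuclideanSpace.single (ι j) (1:ℝ)⟫
          = (if i = j then (1:ℝ) else 0) := by
        simp only [EuclideanSpace.inner_single_left, EuclideanSpace.single_apply]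
        have h2 : (ι i = ι j) ↔ (i = j) := by
          constructor
          · intro h; exact Fin.castLE_injective hd1 h
          · intro h; rw [h]
        simp [h2]
      rw [inner_sub_left, inner_sub_right, inner_sub_right, inner_smul_left,
        inner_smul_right, inner_smul_left, inner_smul_right, hss, hsw i, hws j, hww]
      simp only [RCLike.conj_to_real, hc]
      have h1 : (1 + x L) ≠ 0 := by positivity
      by_cases hij : i = j
      · subst hij
        simp only [if_pos rfl]
        field_simp
        ring
      · simp only [if_neg hij]
        field_simp
        ring
  · intro x y hx hxL hy hyL i
    have hdx : (1:ℝ) ≤ 1 + x L := by linarith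
    have hdy : (1:ℝ) ≤ 1 + y L := by linarith
    have hdx0 : (1 + x L) ≠ 0 := by positivity
    have hdy0 : (1 + y L) ≠ 0 := by positivity
    have habs : ∀ (z : EuclideanSpace ℝ (Fin d)) (k : Fin d), ‖z‖ = 1 → |z k| ≤ 1 := by
      intro z k hz; simpa [hz] using abs_apply_le_norm z k
    have hdiff : ∀ k : Fin d, |x k - y k| ≤ ‖x - y‖ := by
      intro k
      have := abs_apply_le_norm (x - y) k
      simpa using this
    -- v x i - v y i = c y i • w y - c x i • w x
    have hvv : (EuclideanSpace.single (ι i) (1:ℝ) - c x i • w x)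
        - (EuclideanSpace.single (ι i) (1:ℝ) - c y i • w y)
        = (c y i - c x i) • w y + c x i • (w y - w x) := by
      module
    rw [hvv]
    have hwyx : w y - w x = y - x := by simp [hw]
    have hwy : ‖w y‖ ≤ 2 := by
      calc ‖w y‖ ≤ ‖e‖ + ‖y‖ := norm_add_le _ _
        _ ≤ 2 := by rw [hy, he, EuclideanSpace.norm_single]; norm_num
    have hcx : |c x i| ≤ 1 := by
      rw [hc, abs_div]
      have h1 : |x (ι i)| ≤ 1 := habs x (ι i) hx
      have h2 : |1 + x L| = 1 + x L := abs_of_pos (by linarith)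
      rw [h2]
      calc |x (ι i)| / (1 + x L) ≤ 1 / 1 := by
            apply div_le_div₀ (by norm_num) h1 (by norm_num) hdx
        _ = 1 := by norm_num
    have hcc : |c y i - c x i| ≤ 3 * ‖x - y‖ := by
      have key : c y i - c x i
          = ((y (ι i) - x (ι i)) * (1 + x L) + x (ι i) * (x L - y L))
            / ((1 + y L) * (1 + x L)) := by
        rw [hc]
        field_simp
        try ring
      rw [key, abs_div]
      have hden : (1:ℝ) ≤ |(1 + y L) * (1 + x L)| := by
        rw [abs_mul, abs_of_pos (by linarith : (0:ℝ) < 1 + y L),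
          abs_of_pos (by linarith : (0:ℝ) < 1 + x L)]
        nlinarith
      have hnum : |(y (ι i) - x (ι i)) * (1 + x L) + x (ι i) * (x L - y L)|
          ≤ 3 * ‖x - y‖ := by
        have h1 : |y (ι i) - x (ι i)| ≤ ‖x - y‖ := by
          have := hdiff (ι i); rwa [abs_sub_comm]
        have h2 : |x L - y L| ≤ ‖x - y‖ := hdiff L
        have h3 : |x (ι i)| ≤ 1 := habs x (ι i) hx
        have h4 : |1 + x L| ≤ 2 := by
          rw [abs_of_pos (by linarith)]
          have := habs x L hx
          have := abs_le.mp this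
          linarith [this.2]
        calc |(y (ι i) - x (ι i)) * (1 + x L) + x (ι i) * (x L - y L)|
            ≤ |(y (ι i) - x (ι i)) * (1 + x L)| + |x (ι i) * (x L - y L)| := abs_add_le _ _
          _ = |y (ι i) - x (ι i)| * |1 + x L| + |x (ι i)| * |x L - y L| := by
              rw [abs_mul, abs_mul]
          _ ≤ ‖x - y‖ * 2 + 1 * ‖x - y‖ := by
              gcongr
          _ = 3 * ‖x - y‖ := by ring
      calc |(y (ι i) - x (ι i)) * (1 + x L) + x (ι i) * (x L - y L)|
            / |(1 + y L) * (1 + x L)|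
          ≤ |(y (ι i) - x (ι i)) * (1 + x L) + x (ι i) * (x L - y L)| / 1 := by
            apply div_le_div_of_nonneg_left (abs_nonneg _) (by norm_num) hden
        _ ≤ 3 * ‖x - y‖ := by simpa using hnum
    calc ‖(c y i - c x i) • w y + c x i • (w y - w x)‖
        ≤ ‖(c y i - c x i) • w y‖ + ‖c x i • (w y - w x)‖ := norm_add_le _ _
      _ = |c y i - c x i| * ‖w y‖ + |c x i| * ‖w y - w x‖ := by
          rw [norm_smul, norm_smul, Real.norm_eq_abs, Real.norm_eq_abs]
      _ ≤ (3 * ‖x - y‖) * 2 + 1 * ‖x - y‖ := by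
          rw [hwyx]
          have hxy : ‖y - x‖ = ‖x - y‖ := norm_sub_rev y x
          rw [hxy]
          gcongr
      _ ≤ 10 * ‖x - y‖ := by nlinarith [norm_nonneg (x - y)]
end

section
/- Let a_n be a sequence of nonnegative reals and suppose that for all m, n ∈ ℕ with n = km + r (0 ≤ r < m), a_n/n^{d−1} ≤ ((k+1)/k)^{d−1}·(a_m/m^{d−1}) + ((k+1)/k)^{d−1}·C/m + C·m/n for a fixed constant C > 0 and d ≥ 2. Then lim_{n→∞} a_n/n^{d−1} exists and is finite, equal to liminf_m a_m/m^{d−1}. -/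
open Filter

/-- Approximate-subadditivity convergence: if a nonnegative sequence `a` satisfies, for
every decomposition `n = k·m + r` (`0 ≤ r < m`),
`a_n/n^{d-1} ≤ ((k+1)/k)^{d-1}·a_m/m^{d-1} + ((k+1)/k)^{d-1}·C/m + C·m/n`,
then `a_n/n^{d-1}` converges to its liminf (which is finite). -/
theorem approx_subadditive_limit (d : ℕ) (hd : 2 ≤ d) (C : ℝ) (hC : 0 < C)
    (a : ℕ → ℝ) (ha : ∀ n, 0 ≤ a n)
    (hsub : ∀ m n k r : ℕ, 0 < m → 0 < k → n = k * m + r → r < m →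
      a n / (n : ℝ) ^ (d - 1) ≤
        (((k : ℝ) + 1) / (k : ℝ)) ^ (d - 1) * (a m / (m : ℝ) ^ (d - 1))
          + (((k : ℝ) + 1) / (k : ℝ)) ^ (d - 1) * C / (m : ℝ)
          + C * (m : ℝ) / (n : ℝ)) :
    Tendsto (fun n => a n / (n : ℝ) ^ (d - 1)) atTop
      (nhds (liminf (fun m => a m / (m : ℝ) ^ (d - 1)) atTop)) := by
  set b : ℕ → ℝ := fun n => a n / (n : ℝ) ^ (d - 1) with hb_def
  have hb0 : ∀ n, 0 ≤ b n := fun n => div_nonneg (ha n) (by positivity)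
  have hbdd_ge : IsBoundedUnder (· ≥ ·) atTop b :=
    ⟨0, eventually_map.mpr (Eventually.of_forall hb0)⟩
  -- boundedness above
  have hbound : ∀ n : ℕ, 1 ≤ n → b n ≤ 2 ^ (d - 1) * a 1 + 2 ^ (d - 1) * C + C := by
    intro n hn
    have hn' : (0 : ℝ) < n := by exact_mod_cast hn
    have h := hsub 1 n n 0 one_pos hn (by ring) one_pos
    simp only [Nat.cast_one, one_pow, div_one] at h
    have hq2 : ((n : ℝ) + 1) / (n : ℝ) ≤ 2 := by
      rw [div_le_iff₀ hn']
      have : (1 : ℝ) ≤ n := by exact_mod_cast hn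
      linarith
    have hq0 : (0 : ℝ) ≤ ((n : ℝ) + 1) / (n : ℝ) := by positivity
    have hqp : (((n : ℝ) + 1) / (n : ℝ)) ^ (d - 1) ≤ 2 ^ (d - 1) :=
      pow_le_pow_left₀ hq0 hq2 _
    have h1 : (((n : ℝ) + 1) / (n : ℝ)) ^ (d - 1) * a 1 ≤ 2 ^ (d - 1) * a 1 :=
      mul_le_mul_of_nonneg_right hqp (ha 1)
    have h2 : (((n : ℝ) + 1) / (n : ℝ)) ^ (d - 1) * C ≤ 2 ^ (d - 1) * C :=
      mul_le_mul_of_nonneg_right hqp hC.le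
    have h1n : (1 : ℝ) ≤ n := by exact_mod_cast hn
    have h3 : C * 1 / (n : ℝ) ≤ C := by
      rw [mul_one, div_le_iff₀ hn']
      nlinarith
    calc b n ≤ (((n : ℝ) + 1) / (n : ℝ)) ^ (d - 1) * a 1
          + (((n : ℝ) + 1) / (n : ℝ)) ^ (d - 1) * C + C * 1 / (n : ℝ) := h
      _ ≤ 2 ^ (d - 1) * a 1 + 2 ^ (d - 1) * C + C := by linarith
  have hbdd_le : IsBoundedUnder (· ≤ ·) atTop b :=
    ⟨2 ^ (d - 1) * a 1 + 2 ^ (d - 1) * C + C, eventually_map.mpr (by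
      filter_upwards [eventually_ge_atTop 1] with n hn using hbound n hn)⟩
  -- key estimate : limsup b ≤ b m + C / m for every m ≥ 1
  have hkey : ∀ m : ℕ, 1 ≤ m → limsup b atTop ≤ b m + C / m := by
    intro m hm
    have hmpos : 0 < m := hm
    have hm' : (0 : ℝ) < m := by exact_mod_cast hm
    set q : ℕ → ℝ := fun n => (((n / m : ℕ) : ℝ) + 1) / ((n / m : ℕ) : ℝ) with hq_def
    set g : ℕ → ℝ := fun n =>
      q n ^ (d - 1) * b m + q n ^ (d - 1) * C / (m : ℝ) + C * (m : ℝ) / (n : ℝ) with hg_def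
    have hbg : ∀ᶠ n in atTop, b n ≤ g n := by
      filter_upwards [eventually_ge_atTop m] with n hn
      have hk : 0 < n / m := Nat.one_le_div_iff hmpos |>.mpr hn
      exact hsub m n (n / m) (n % m) hmpos hk (Nat.div_add_mod' n m).symm (Nat.mod_lt n hmpos)
    -- tendsto of g
    have hkdiv : Tendsto (fun n : ℕ => n / m) atTop atTop := by
      refine tendsto_atTop_atTop.mpr fun c => ⟨c * m, fun n hn => ?_⟩
      exact (Nat.le_div_iff_mul_le hmpos).mpr hn
    have hkcast : Tendsto (fun n : ℕ => ((n / m : ℕ) : ℝ)) atTop atTop :=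
      tendsto_natCast_atTop_atTop.comp hkdiv
    have hqreal : Tendsto (fun x : ℝ => (x + 1) / x) atTop (nhds 1) := by
      have h1 : Tendsto (fun x : ℝ => 1 + x⁻¹) atTop (nhds (1 + 0)) :=
        tendsto_const_nhds.add tendsto_inv_atTop_zero
      rw [add_zero] at h1
      refine h1.congr' ?_
      filter_upwards [eventually_gt_atTop (0 : ℝ)] with x hx
      field_simp
    have hq1 : Tendsto q atTop (nhds 1) := hqreal.comp hkcast
    have hqpow : Tendsto (fun n => q n ^ (d - 1)) atTop (nhds 1) := by
      have := hq1.pow (d - 1)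
      simpa using this
    have hg1 : Tendsto (fun n => q n ^ (d - 1) * b m) atTop (nhds (b m)) := by
      have := hqpow.mul_const (b m)
      simpa using this
    have hg2 : Tendsto (fun n => q n ^ (d - 1) * C / (m : ℝ)) atTop (nhds (C / m)) := by
      have := (hqpow.mul_const C).div_const (m : ℝ)
      simpa using this
    have hg3 : Tendsto (fun n : ℕ => C * (m : ℝ) / (n : ℝ)) atTop (nhds 0) :=
      tendsto_const_div_atTop_nhds_zero_nat (C * m)
    have hg : Tendsto g atTop (nhds (b m + C / m)) := by
      have := (hg1.add hg2).add hg3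
      simpa using this
    calc limsup b atTop ≤ limsup g atTop :=
          limsup_le_limsup hbg hbdd_ge.isCoboundedUnder_le hg.isBoundedUnder_le
      _ = b m + C / m := hg.limsup_eq
  -- limsup ≤ liminf
  have key2 : limsup b atTop ≤ liminf b atTop := by
    refine le_of_forall_pos_le_add fun ε hε => ?_
    have hfreq : ∃ᶠ m in atTop, b m < liminf b atTop + ε / 2 :=
      frequently_lt_of_liminf_lt hbdd_le.isCoboundedUnder_ge (by linarith)
    have hev : ∀ᶠ m : ℕ in atTop, 1 ≤ m ∧ C / (m : ℝ) ≤ ε / 2 := by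
      filter_upwards [eventually_ge_atTop (max 1 ⌈2 * C / ε⌉₊)] with n hn
      have h1 : 1 ≤ n := le_trans (le_max_left _ _) hn
      have h2 : ⌈2 * C / ε⌉₊ ≤ n := le_trans (le_max_right _ _) hn
      have h2' : 2 * C / ε ≤ (n : ℝ) := (Nat.ceil_le).mp h2
      have hn' : (0 : ℝ) < n := by exact_mod_cast h1
      refine ⟨h1, ?_⟩
      rw [div_le_iff₀ hn']
      rw [div_le_iff₀ hε] at h2'
      nlinarith
    obtain ⟨m, hm1, hm2, hm3⟩ := (hfreq.and_eventually hev).exists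
    have := hkey m hm2
    linarith
  have heq : limsup b atTop = liminf b atTop :=
    le_antisymm key2 (liminf_le_limsup hbdd_le hbdd_ge)
  exact tendsto_of_liminf_eq_limsup rfl heq hbdd_le hbdd_ge
end
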